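/- Let E be an essential matrix (E = [t]_× R with R ∈ SO(3), t ∈ ℝ³), let f ∈ ℝ with f ≠ 0, K = diag(f,f,1), and F = K⁻¹ E K⁻¹ with entries f_{ij}. Then F satisfies the quintic constraint: f₁₁f₁₃³f₃₁ + f₁₃²f₂₁f₂₃f₃₁ + f₁₁f₁₃f₂₃²f₃₁ + f₂₁f₂₃³f₃₁ − f₁₁f₁₃f₃₁³ − f₂₁f₂₃f₃₁³ + f₁₂f₁₃³f₃₂ + f₁₃²f₂₂f₂₃f₃₂ + f₁₂f₁₃f₂₃²f₃₂ + f₂₂f₂₃³f₃₂ − f₁₂f₁₃f₃₁²f₃₂ − f₂₂f₂₃f₃₁²f₃₂ − f₁₁f₁₃f₃₁f₃₂² − f₂₁f₂₃f₃₁f₃₂² − f₁₂f₁₃f₃₂³ − f₂₂f₂₃f₃₂³ − f₁₁²f₁₃²f₃₃ − 2f₁₁f₁₃f₂₁f₂₃f₃₃ − 2f₁₂f₁₃f₂₂f₂₃f₃₃ − f₁₂²f₁₃²f₃₃ − f₂₁²f₂₃²f₃₃ − f₂₂²f₂₃²f₃₃ + f₁₁²f₃₁²f₃₃ + f₂₁²f₃₁²f₃₃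 + 2f₁₁f₁₂f₃₁f₃₂f₃₃ + 2f₂₁f₂₂f₃₁f₃₂f₃₃ + f₁₂²f₃₂²f₃₃ + f₂₂²f₃₂²f₃₃ = 0. -/

import Mathlib

open Matrix

/-- The skew-symmetric cross-product matrix `[t]ₓ` of `t ∈ ℝ³`. -/
def crossMat (t : Fin 3 → ℝ) : Matrix (Fin 3) (Fin 3) ℝ :=
  !![0, -t 2, t 1; t 2, 0, -t 0; -t 1, t 0, 0]

/-- The quintic holds for the essential matrix itself, given the
trace/orthogonality relations coming from `E = [t]ₓ R`. -/
lemma keyQ (e00 e01 e02 e10 e11 e12 e20 e21 e22 s0 s1 s2 T : ℝ)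
    (h1 : e00 * e02 + e10 * e12 + e20 * e22 = -(s0 * s2))
    (h2 : e01 * e02 + e11 * e12 + e21 * e22 = -(s1 * s2))
    (h3 : e02 ^ 2 + e12 ^ 2 + e22 ^ 2 = T - s2 ^ 2)
    (h4 : e00 ^ 2 + e10 ^ 2 + e20 ^ 2 = T - s0 ^ 2)
    (h5 : e00 * e01 + e10 * e11 + e20 * e21 = -(s0 * s1))
    (h6 : e01 ^ 2 + e11 ^ 2 + e21 ^ 2 = T - s1 ^ 2)
    (h7 : e20 * s0 + e21 * s1 + e22 * s2 = 0)
    (h8 : s0 ^ 2 + s1 ^ 2 + s2 ^ 2 = T) :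
    e00 * e02 ^ 3 * e20 + e02 ^ 2 * e10 * e12 * e20
      + e00 * e02 * e12 ^ 2 * e20 + e10 * e12 ^ 3 * e20
      - e00 * e02 * e20 ^ 3 - e10 * e12 * e20 ^ 3
      + e01 * e02 ^ 3 * e21 + e02 ^ 2 * e11 * e12 * e21
      + e01 * e02 * e12 ^ 2 * e21 + e11 * e12 ^ 3 * e21
      - e01 * e02 * e20 ^ 2 * e21 - e11 * e12 * e20 ^ 2 * e21
      - e00 * e02 * e20 * e21 ^ 2 - e10 * e12 * e20 * e21 ^ 2
      - e01 * e02 * e21 ^ 3 - e11 * e12 * e21 ^ 3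
      - e00 ^ 2 * e02 ^ 2 * e22
      - 2 * e00 * e02 * e10 * e12 * e22
      - 2 * e01 * e02 * e11 * e12 * e22
      - e01 ^ 2 * e02 ^ 2 * e22
      - e10 ^ 2 * e12 ^ 2 * e22 - e11 ^ 2 * e12 ^ 2 * e22
      + e00 ^ 2 * e20 ^ 2 * e22 + e10 ^ 2 * e20 ^ 2 * e22
      + 2 * e00 * e01 * e20 * e21 * e22
      + 2 * e10 * e11 * e20 * e21 * e22
      + e01 ^ 2 * e21 ^ 2 * e22 + e11 ^ 2 * e21 ^ 2 * e22 = 0 := by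
  linear_combination
    (e22 * s0 * s2 + e20 * e22 ^ 2 - e20 * e21 ^ 2 - e20 ^ 3 + e12 ^ 2 * e20 - e10 * e12 * e22 + e02 ^ 2 * e20 - e00 * e02 * e22) * h1
    + (e22 * s1 * s2 + e21 * e22 ^ 2 - e21 ^ 3 - e20 ^ 2 * e21 + e12 ^ 2 * e21 - e11 * e12 * e22 + e02 ^ 2 * e21 - e01 * e02 * e22) * h2
    + (- e21 * s1 * s2 - e21 ^ 2 * e22 - e20 * s0 * s2 - e20 ^ 2 * e22) * h3
    + (e20 ^ 2 * e22) * h4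
    + (2 * e20 * e21 * e22) * h5
    + (e21 ^ 2 * e22) * h6
    + (- s2 * T + s2 ^ 3 - e21 * e22 * s1 + e21 ^ 2 * s2 - e20 * e22 * s0 + e20 ^ 2 * s2) * h7
    + (- e22 * s2 ^ 2) * h8

set_option maxHeartbeats 4000000 in
/-- The fundamental matrix `F = K⁻¹ E K⁻¹` of a pair of cameras with a common
focal length `f` satisfies the quintic constraint of the f+E+f elimination
ideal. -/
theorem fEf_quintic (t : Fin 3 → ℝ) (R : Matrix (Fin 3) (Fin 3) ℝ)
    (hR : R * Rᵀ = 1) (hdet : R.det = 1) (E : Matrix (Fin 3) (Fin 3) ℝ)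
    (hE : E = crossMat t * R) (f : ℝ) (hf : f ≠ 0)
    (K : Matrix (Fin 3) (Fin 3) ℝ) (hK : K = !![f, 0, 0; 0, f, 0; 0, 0, 1])
    (F : Matrix (Fin 3) (Fin 3) ℝ) (hF : F = K⁻¹ * E * K⁻¹) :
    F 0 0 * F 0 2 ^ 3 * F 2 0 + F 0 2 ^ 2 * F 1 0 * F 1 2 * F 2 0
      + F 0 0 * F 0 2 * F 1 2 ^ 2 * F 2 0 + F 1 0 * F 1 2 ^ 3 * F 2 0
      - F 0 0 * F 0 2 * F 2 0 ^ 3 - F 1 0 * F 1 2 * F 2 0 ^ 3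
      + F 0 1 * F 0 2 ^ 3 * F 2 1 + F 0 2 ^ 2 * F 1 1 * F 1 2 * F 2 1
      + F 0 1 * F 0 2 * F 1 2 ^ 2 * F 2 1 + F 1 1 * F 1 2 ^ 3 * F 2 1
      - F 0 1 * F 0 2 * F 2 0 ^ 2 * F 2 1 - F 1 1 * F 1 2 * F 2 0 ^ 2 * F 2 1
      - F 0 0 * F 0 2 * F 2 0 * F 2 1 ^ 2 - F 1 0 * F 1 2 * F 2 0 * F 2 1 ^ 2
      - F 0 1 * F 0 2 * F 2 1 ^ 3 - F 1 1 * F 1 2 * F 2 1 ^ 3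
      - F 0 0 ^ 2 * F 0 2 ^ 2 * F 2 2
      - 2 * F 0 0 * F 0 2 * F 1 0 * F 1 2 * F 2 2
      - 2 * F 0 1 * F 0 2 * F 1 1 * F 1 2 * F 2 2
      - F 0 1 ^ 2 * F 0 2 ^ 2 * F 2 2
      - F 1 0 ^ 2 * F 1 2 ^ 2 * F 2 2 - F 1 1 ^ 2 * F 1 2 ^ 2 * F 2 2
      + F 0 0 ^ 2 * F 2 0 ^ 2 * F 2 2 + F 1 0 ^ 2 * F 2 0 ^ 2 * F 2 2
      + 2 * F 0 0 * F 0 1 * F 2 0 * F 2 1 * F 2 2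
      + 2 * F 1 0 * F 1 1 * F 2 0 * F 2 1 * F 2 2
      + F 0 1 ^ 2 * F 2 1 ^ 2 * F 2 2 + F 1 1 ^ 2 * F 2 1 ^ 2 * F 2 2 = 0 := by
  -- column orthonormality of R
  have hR' : Rᵀ * R = 1 := mul_eq_one_comm.mp hR
  have cc : ∀ j k : Fin 3, R 0 j * R 0 k + R 1 j * R 1 k + R 2 j * R 2 k
      = if j = k then 1 else 0 := by
    intro j k
    have := congrFun (congrFun hR' j) k
    simpa [Matrix.mul_apply, Fin.sum_univ_three, Matrix.one_apply, mul_comm] using this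
  have rr : ∀ a b : Fin 3, R a 0 * R b 0 + R a 1 * R b 1 + R a 2 * R b 2
      = if a = b then 1 else 0 := by
    intro a b
    have := congrFun (congrFun hR a) b
    simpa [Matrix.mul_apply, Fin.sum_univ_three, Matrix.one_apply] using this
  have c00 : R 0 0 * R 0 0 + R 1 0 * R 1 0 + R 2 0 * R 2 0 = 1 := by simpa using cc 0 0
  have c11 : R 0 1 * R 0 1 + R 1 1 * R 1 1 + R 2 1 * R 2 1 = 1 := by simpa using cc 1 1
  have c22 : R 0 2 * R 0 2 + R 1 2 * R 1 2 + R 2 2 * R 2 2 = 1 := by simpa using cc 2 2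
  have c01 : R 0 0 * R 0 1 + R 1 0 * R 1 1 + R 2 0 * R 2 1 = 0 := by simpa using cc 0 1
  have c02 : R 0 0 * R 0 2 + R 1 0 * R 1 2 + R 2 0 * R 2 2 = 0 := by simpa using cc 0 2
  have c12 : R 0 1 * R 0 2 + R 1 1 * R 1 2 + R 2 1 * R 2 2 = 0 := by simpa using cc 1 2
  have r00 : R 0 0 * R 0 0 + R 0 1 * R 0 1 + R 0 2 * R 0 2 = 1 := by simpa using rr 0 0
  have r11 : R 1 0 * R 1 0 + R 1 1 * R 1 1 + R 1 2 * R 1 2 = 1 := by simpa using rr 1 1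
  have r22 : R 2 0 * R 2 0 + R 2 1 * R 2 1 + R 2 2 * R 2 2 = 1 := by simpa using rr 2 2
  have r01 : R 0 0 * R 1 0 + R 0 1 * R 1 1 + R 0 2 * R 1 2 = 0 := by simpa using rr 0 1
  have r02 : R 0 0 * R 2 0 + R 0 1 * R 2 1 + R 0 2 * R 2 2 = 0 := by simpa using rr 0 2
  have r12 : R 1 0 * R 2 0 + R 1 1 * R 2 1 + R 1 2 * R 2 2 = 0 := by simpa using rr 1 2
  -- entries of E
  have hEe : ∀ i j, E i j = (crossMat t) i 0 * R 0 j + (crossMat t) i 1 * R 1 j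
      + (crossMat t) i 2 * R 2 j := by
    intro i j
    rw [hE]
    simp [Matrix.mul_apply, Fin.sum_univ_three]
  -- abbreviations
  set s0 : ℝ := R 0 0 * t 0 + R 1 0 * t 1 + R 2 0 * t 2 with hs0
  set s1 : ℝ := R 0 1 * t 0 + R 1 1 * t 1 + R 2 1 * t 2 with hs1
  set s2 : ℝ := R 0 2 * t 0 + R 1 2 * t 1 + R 2 2 * t 2 with hs2
  set T : ℝ := t 0 ^ 2 + t 1 ^ 2 + t 2 ^ 2 with hT
  have h1 : E 0 0 * E 0 2 + E 1 0 * E 1 2 + E 2 0 * E 2 2 = -(s0 * s2) := by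
    simp only [hEe, crossMat]
    simp only [Matrix.cons_val', Matrix.cons_val_zero, Matrix.cons_val_one, Matrix.head_cons,
      Matrix.empty_val', Matrix.cons_val_fin_one, Matrix.cons_val_two, Matrix.tail_cons,
      Matrix.head_fin_const, Matrix.of_apply, Matrix.cons_val_one, Matrix.head_cons]
    norm_num
    rw [hs0, hs2]
    linear_combination (t 0 ^ 2 + t 1 ^ 2 + t 2 ^ 2) * c02
  have h2 : E 0 1 * E 0 2 + E 1 1 * E 1 2 + E 2 1 * E 2 2 = -(s1 * s2) := by
    simp only [hEe, crossMat]
    simp only [Matrix.cons_val', Matrix.cons_val_zero, Matrix.cons_val_one, Matrix.head_cons,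
      Matrix.empty_val', Matrix.cons_val_fin_one, Matrix.cons_val_two, Matrix.tail_cons,
      Matrix.head_fin_const, Matrix.of_apply, Matrix.cons_val_one, Matrix.head_cons]
    norm_num
    rw [hs1, hs2]
    linear_combination (t 0 ^ 2 + t 1 ^ 2 + t 2 ^ 2) * c12
  have h3 : E 0 2 ^ 2 + E 1 2 ^ 2 + E 2 2 ^ 2 = T - s2 ^ 2 := by
    simp only [hEe, crossMat]
    simp only [Matrix.cons_val', Matrix.cons_val_zero, Matrix.cons_val_one, Matrix.head_cons,
      Matrix.empty_val', Matrix.cons_val_fin_one, Matrix.cons_val_two, Matrix.tail_cons,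
      Matrix.head_fin_const, Matrix.of_apply, Matrix.cons_val_one, Matrix.head_cons]
    norm_num
    rw [hs2, hT]
    linear_combination (t 0 ^ 2 + t 1 ^ 2 + t 2 ^ 2) * c22
  have h4 : E 0 0 ^ 2 + E 1 0 ^ 2 + E 2 0 ^ 2 = T - s0 ^ 2 := by
    simp only [hEe, crossMat]
    simp only [Matrix.cons_val', Matrix.cons_val_zero, Matrix.cons_val_one, Matrix.head_cons,
      Matrix.empty_val', Matrix.cons_val_fin_one, Matrix.cons_val_two, Matrix.tail_cons,
      Matrix.head_fin_const, Matrix.of_apply, Matrix.cons_val_one, Matrix.head_cons]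
    norm_num
    rw [hs0, hT]
    linear_combination (t 0 ^ 2 + t 1 ^ 2 + t 2 ^ 2) * c00
  have h5 : E 0 0 * E 0 1 + E 1 0 * E 1 1 + E 2 0 * E 2 1 = -(s0 * s1) := by
    simp only [hEe, crossMat]
    simp only [Matrix.cons_val', Matrix.cons_val_zero, Matrix.cons_val_one, Matrix.head_cons,
      Matrix.empty_val', Matrix.cons_val_fin_one, Matrix.cons_val_two, Matrix.tail_cons,
      Matrix.head_fin_const, Matrix.of_apply, Matrix.cons_val_one, Matrix.head_cons]
    norm_num
    rw [hs0, hs1]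
    linear_combination (t 0 ^ 2 + t 1 ^ 2 + t 2 ^ 2) * c01
  have h6 : E 0 1 ^ 2 + E 1 1 ^ 2 + E 2 1 ^ 2 = T - s1 ^ 2 := by
    simp only [hEe, crossMat]
    simp only [Matrix.cons_val', Matrix.cons_val_zero, Matrix.cons_val_one, Matrix.head_cons,
      Matrix.empty_val', Matrix.cons_val_fin_one, Matrix.cons_val_two, Matrix.tail_cons,
      Matrix.head_fin_const, Matrix.of_apply, Matrix.cons_val_one, Matrix.head_cons]
    norm_num
    rw [hs1, hT]
    linear_combination (t 0 ^ 2 + t 1 ^ 2 + t 2 ^ 2) * c11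
  have h7 : E 2 0 * s0 + E 2 1 * s1 + E 2 2 * s2 = 0 := by
    simp only [hEe, crossMat]
    simp only [Matrix.cons_val', Matrix.cons_val_zero, Matrix.cons_val_one, Matrix.head_cons,
      Matrix.empty_val', Matrix.cons_val_fin_one, Matrix.cons_val_two, Matrix.tail_cons,
      Matrix.head_fin_const, Matrix.of_apply, Matrix.cons_val_one, Matrix.head_cons]
    norm_num
    rw [hs0, hs1, hs2]
    linear_combination (-(t 1 * t 0)) * r00 + (-(t 1 * t 1)) * r01
      + (-(t 1 * t 2)) * r02 + (t 0 * t 0) * r01 + (t 0 * t 1) * r11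
      + (t 0 * t 2) * r12
  have h8 : s0 ^ 2 + s1 ^ 2 + s2 ^ 2 = T := by
    rw [hs0, hs1, hs2, hT]
    linear_combination (t 0 * t 0) * r00 + (2 * t 0 * t 1) * r01
      + (2 * t 0 * t 2) * r02 + (t 1 * t 1) * r11 + (2 * t 1 * t 2) * r12
      + (t 2 * t 2) * r22
  have hQ := keyQ (E 0 0) (E 0 1) (E 0 2) (E 1 0) (E 1 1) (E 1 2) (E 2 0) (E 2 1) (E 2 2)
    s0 s1 s2 T h1 h2 h3 h4 h5 h6 h7 h8
  -- inverse of K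
  have hKinv : K⁻¹ = !![1/f, 0, 0; 0, 1/f, 0; 0, 0, 1] := by
    rw [hK]
    apply inv_eq_right_inv
    ext i j
    fin_cases i <;> fin_cases j <;>
      norm_num [Matrix.mul_apply, Fin.sum_univ_three, Matrix.one_apply, Matrix.cons_val_two, Matrix.vecHead,
        Matrix.vecTail, Fin.ext_iff] <;>
      field_simp
  have hF' : F = !![1/f, 0, 0; 0, 1/f, 0; 0, 0, 1] * E * !![1/f, 0, 0; 0, 1/f, 0; 0, 0, 1] := by
    rw [hF, hKinv]
  have g00 : F 0 0 = E 0 0 / (f * f) := by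
    rw [hF']; simp only [Matrix.mul_apply, Fin.sum_univ_three]; norm_num [Matrix.cons_val_two, Matrix.vecHead, Matrix.vecTail]; ring
  have g01 : F 0 1 = E 0 1 / (f * f) := by
    rw [hF']; simp only [Matrix.mul_apply, Fin.sum_univ_three]; norm_num [Matrix.cons_val_two, Matrix.vecHead, Matrix.vecTail]; ring
  have g02 : F 0 2 = E 0 2 / f := by
    rw [hF']; simp only [Matrix.mul_apply, Fin.sum_univ_three]; norm_num [Matrix.cons_val_two, Matrix.vecHead, Matrix.vecTail]; ring
  have g10 : F 1 0 = E 1 0 / (f * f) := by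
    rw [hF']; simp only [Matrix.mul_apply, Fin.sum_univ_three]; norm_num [Matrix.cons_val_two, Matrix.vecHead, Matrix.vecTail]; ring
  have g11 : F 1 1 = E 1 1 / (f * f) := by
    rw [hF']; simp only [Matrix.mul_apply, Fin.sum_univ_three]; norm_num [Matrix.cons_val_two, Matrix.vecHead, Matrix.vecTail]; ring
  have g12 : F 1 2 = E 1 2 / f := by
    rw [hF']; simp only [Matrix.mul_apply, Fin.sum_univ_three]; norm_num [Matrix.cons_val_two, Matrix.vecHead, Matrix.vecTail]; ring
  have g20 : F 2 0 = E 2 0 / f := by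
    rw [hF']; simp only [Matrix.mul_apply, Fin.sum_univ_three]; norm_num [Matrix.cons_val_two, Matrix.vecHead, Matrix.vecTail]; ring
  have g21 : F 2 1 = E 2 1 / f := by
    rw [hF']; simp only [Matrix.mul_apply, Fin.sum_univ_three]; norm_num [Matrix.cons_val_two, Matrix.vecHead, Matrix.vecTail]; ring
  have g22 : F 2 2 = E 2 2 := by
    rw [hF']; simp only [Matrix.mul_apply, Fin.sum_univ_three]; norm_num [Matrix.cons_val_two, Matrix.vecHead, Matrix.vecTail]
  rw [g00, g01, g02, g10, g11, g12, g20, g21, g22]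
  linear_combination (f⁻¹) ^ 6 * hQ
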